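/- arXiv:1606.02642 — 3 statements merged into one kernel-verified Lean document; each statement's English description precedes it below -/
import Mathlib

section
/- For fixed x with |x| < R (R the radius of convergence of f at 0), the function α ↦ Σ_{n≥0} c_n x^n/(n+α) is analytic on ℂ \ {0,-1,-2,...} and agrees with α ↦ x^{-α} ∫_0^x t^{α-1} f(t) dt for Re α > 0; i.e., the Hadamard finite part Σ_{n≥0} c_n x^n/(n+α) is the analytic continuation in α of the integral. -/
open Complex MeasureTheory Set Filter intervalIntegral Metric

private lemma ofReal_mul_cpow_aux {t : ℝ} (ht : 0 < t) {x : ℂ} (hx : x ≠ 0) (w : ℂ) :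
    ((t : ℂ) * x) ^ w = (t : ℂ) ^ w * x ^ w := by
  have htc : (t : ℂ) ≠ 0 := Complex.ofReal_ne_zero.2 ht.ne'
  rw [Complex.cpow_def_of_ne_zero (mul_ne_zero htc hx), Complex.log_ofReal_mul ht hx,
    Complex.ofReal_log ht.le, add_mul, Complex.exp_add,
    ← Complex.cpow_def_of_ne_zero htc, ← Complex.cpow_def_of_ne_zero hx]

private lemma summable_norm_aux {c : ℕ → ℂ} {R : ℝ}
    (hconv : ∀ y : ℂ, ‖y‖ < R → Summable (fun n => c n * y ^ n))
    {x : ℂ} (hx : ‖x‖ < R) : Summable (fun n => ‖c n * x ^ n‖) := by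
  set r : ℝ := (‖x‖ + R) / 2 with hrdef
  have hx0 : (0 : ℝ) ≤ ‖x‖ := norm_nonneg x
  have hr0 : 0 < r := by rw [hrdef]; linarith
  have hxr : ‖x‖ < r := by rw [hrdef]; linarith
  have hrR : r < R := by rw [hrdef]; linarith
  have hs : Summable (fun n => c n * (r : ℂ) ^ n) := hconv r (by
    rwa [Complex.norm_real, Real.norm_eq_abs, abs_of_pos hr0])
  have hbdd : BddAbove (Set.range fun n => ‖c n * (r : ℂ) ^ n‖) :=
    (hs.tendsto_atTop_zero.norm.bddAbove_range)
  obtain ⟨C, hC⟩ := hbdd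
  have key : ∀ n, ‖c n * x ^ n‖ ≤ C * (‖x‖ / r) ^ n := by
    intro n
    have h1 : ‖c n * (r : ℂ) ^ n‖ ≤ C := hC ⟨n, rfl⟩
    have h2 : ‖c n * x ^ n‖ = ‖c n * (r : ℂ) ^ n‖ * (‖x‖ / r) ^ n := by
      have hrx : r * (‖x‖ / r) = ‖x‖ := by field_simp
      rw [norm_mul, norm_mul, norm_pow, norm_pow, Complex.norm_real, Real.norm_eq_abs,
        abs_of_pos hr0, mul_assoc, ← mul_pow, hrx]
    rw [h2]
    exact mul_le_mul_of_nonneg_right h1 (by positivity)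
  have hgeo : Summable (fun n : ℕ => C * (‖x‖ / r) ^ n) :=
    (summable_geometric_of_lt_one (by positivity) (by rw [div_lt_one hr0]; exact hxr)).mul_left C
  exact Summable.of_nonneg_of_le (fun n => norm_nonneg _) key hgeo

/-- For fixed `x` with `|x| < R` (`R` the radius of convergence of
`∑ cₙ xⁿ` at `0`), the function `α ↦ ∑ cₙ xⁿ/(n+α)` is analytic on
`ℂ \ {0,-1,-2,...}` and agrees with `α ↦ x^(-α) ∫_0^x t^(α-1) f(t) dt` for `Re α > 0`:
the Hadamard finite part is the analytic continuation in `α` of the integral. -/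
theorem hadamard_analytic_continuation (c : ℕ → ℂ) (R : ℝ) (hR : 0 < R)
    (hconv : ∀ y : ℂ, ‖y‖ < R → Summable (fun n => c n * y ^ n))
    (x : ℂ) (hx : ‖x‖ < R) (hx0 : x ≠ 0) :
    AnalyticOnNhd ℂ (fun α : ℂ => ∑' n : ℕ, c n * x ^ n / ((n : ℂ) + α))
      {α : ℂ | ∀ m : ℕ, α ≠ -(m : ℂ)} ∧
    ∀ α : ℂ, 0 < α.re →
      (∑' n : ℕ, c n * x ^ n / ((n : ℂ) + α))
        = x ^ (-α) * ∫ t in (0:ℝ)..1,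
            x * ((t : ℂ) * x) ^ (α - 1) * (∑' n : ℕ, c n * ((t : ℂ) * x) ^ n) := by
  have hsum : Summable (fun n => ‖c n * x ^ n‖) := summable_norm_aux hconv hx
  constructor
  · -- Analyticity
    intro α₀ hα₀
    obtain ⟨N, hN⟩ := exists_nat_gt (‖α₀‖ + 1)
    have hN0 : 0 < N := by
      have : (0:ℝ) < N := lt_of_le_of_lt (by positivity) hN
      exact_mod_cast this
    have hne : (Finset.range N).Nonempty := Finset.nonempty_range_iff.2 hN0.ne'
    set ε : ℝ := (Finset.range N).inf' hne (fun m => ‖(m : ℂ) + α₀‖) with hεdef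
    have hε0 : 0 < ε := by
      rw [hεdef, Finset.lt_inf'_iff]
      intro m _
      rw [norm_pos_iff]
      intro h
      exact hα₀ m (by linear_combination h - α₀ - (m:ℂ))
    set δ : ℝ := min (1/2) (ε/2) with hδdef
    have hδ0 : 0 < δ := by rw [hδdef]; positivity
    have claim : ∀ α ∈ ball α₀ δ, ∀ m : ℕ, δ ≤ ‖(m : ℂ) + α‖ := by
      intro α hα m
      have hαα₀ : ‖α - α₀‖ < δ := by rwa [mem_ball, dist_eq_norm] at hα
      have hδhalf : δ ≤ 1/2 := min_le_left _ _
      have hδε : δ ≤ ε/2 := min_le_right _ _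
      by_cases hm : m < N
      · have h1 : ε ≤ ‖(m : ℂ) + α₀‖ := Finset.inf'_le _ (Finset.mem_range.2 hm)
        have h2 : ‖(m : ℂ) + α₀‖ - ‖α - α₀‖ ≤ ‖(m : ℂ) + α‖ := by
          have := norm_sub_norm_le ((m : ℂ) + α₀) (α₀ - α)
          calc ‖(m : ℂ) + α₀‖ - ‖α - α₀‖
              = ‖(m : ℂ) + α₀‖ - ‖α₀ - α‖ := by rw [norm_sub_rev]
            _ ≤ ‖((m : ℂ) + α₀) - (α₀ - α)‖ := this
            _ = ‖(m : ℂ) + α‖ := by ring_nf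
        linarith
      · push_neg at hm
        have hmN : (N : ℝ) ≤ m := by exact_mod_cast hm
        have h3 : ‖(m : ℂ)‖ - ‖α‖ ≤ ‖(m : ℂ) + α‖ := by
          have h := norm_sub_norm_le ((m : ℂ)) (-α)
          rwa [sub_neg_eq_add, norm_neg] at h
        have h4 : ‖α‖ ≤ ‖α₀‖ + δ := by
          calc ‖α‖ = ‖α₀ + (α - α₀)‖ := by ring_nf
            _ ≤ ‖α₀‖ + ‖α - α₀‖ := norm_add_le _ _
            _ ≤ ‖α₀‖ + δ := by linarith
        have h5 : ‖(m : ℂ)‖ = (m : ℝ) := by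
          simp [Complex.norm_natCast]
        rw [h5] at h3
        linarith
    have hdiff : DifferentiableOn ℂ (fun α : ℂ => ∑' n : ℕ, c n * x ^ n / ((n : ℂ) + α))
        (ball α₀ δ) := by
      refine differentiableOn_tsum_of_summable_norm (u := fun n => ‖c n * x ^ n‖ / δ)
        (hsum.div_const δ) (fun n => ?_) isOpen_ball (fun n α hα => ?_)
      · intro α hα
        have hne0 : (n : ℂ) + α ≠ 0 := by
          intro h
          have := claim α hα n
          rw [h, norm_zero] at this
          linarith
        exact (((differentiableAt_const (c n * x ^ n)).div
          ((differentiableAt_const ((n : ℂ))).add differentiableAt_id) hne0)).differentiableWithinAt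
      · rw [norm_div]
        exact div_le_div_of_nonneg_left (norm_nonneg _) hδ0 (claim α hα n)
    exact hdiff.analyticAt (isOpen_ball.mem_nhds (mem_ball_self hδ0))
  · -- Integral identity
    intro α hα
    set F : ℕ → ℝ → ℂ := fun n t => x * ((t : ℂ) * x) ^ (α - 1) * (c n * ((t : ℂ) * x) ^ n)
      with hFdef
    have hre : ∀ n : ℕ, (-1 : ℝ) < (α + n - 1).re := by
      intro n
      simp only [Complex.sub_re, Complex.add_re, Complex.natCast_re, Complex.one_re]
      have : (0:ℝ) ≤ n := Nat.cast_nonneg n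
      linarith
    have hαn0 : ∀ n : ℕ, (α + (n : ℂ)) ≠ 0 := by
      intro n h
      have := congrArg Complex.re h
      simp only [Complex.add_re, Complex.natCast_re, Complex.zero_re] at this
      have : (0:ℝ) ≤ n := Nat.cast_nonneg n
      linarith [congrArg Complex.re h, Complex.add_re α n]
    have hEq : ∀ n : ℕ, EqOn (F n)
        (fun t : ℝ => c n * x ^ (α + (n : ℂ)) * (t : ℂ) ^ (α + (n : ℂ) - 1)) (Ioc (0:ℝ) 1) := by
      intro n t ht
      have htc : (t : ℂ) ≠ 0 := Complex.ofReal_ne_zero.2 ht.1.ne'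
      have htx : (t : ℂ) * x ≠ 0 := mul_ne_zero htc hx0
      show x * ((t : ℂ) * x) ^ (α - 1) * (c n * ((t : ℂ) * x) ^ n)
        = c n * x ^ (α + (n : ℂ)) * (t : ℂ) ^ (α + (n : ℂ) - 1)
      calc x * ((t : ℂ) * x) ^ (α - 1) * (c n * ((t : ℂ) * x) ^ n)
          = x * (((t : ℂ) * x) ^ (α - 1) * ((t : ℂ) * x) ^ ((n : ℕ) : ℂ)) * c n := by
            rw [Complex.cpow_natCast]; ring
        _ = x * ((t : ℂ) * x) ^ (α - 1 + n) * c n := by rw [← Complex.cpow_add _ _ htx]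
        _ = x * ((t : ℂ) ^ (α - 1 + n) * x ^ (α - 1 + n)) * c n := by
            rw [ofReal_mul_cpow_aux ht.1 hx0]
        _ = c n * (x * x ^ (α - 1 + n)) * (t : ℂ) ^ (α - 1 + n) := by ring
        _ = c n * x ^ (α + (n : ℂ)) * (t : ℂ) ^ (α + (n : ℂ) - 1) := by
            have hx1 : x ^ (α + (n : ℂ)) = x * x ^ (α - 1 + (n : ℂ)) := by
              conv_lhs => rw [show α + (n : ℂ) = 1 + (α - 1 + (n : ℂ)) by ring]
              rw [Complex.cpow_add _ _ hx0, Complex.cpow_one]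
            rw [show α + (n : ℂ) - 1 = α - 1 + (n : ℂ) by ring, hx1]
    have hInt : ∀ n : ℕ, IntegrableOn (F n) (Ioc (0:ℝ) 1) volume := by
      intro n
      rw [integrableOn_congr_fun (hEq n) measurableSet_Ioc]
      have h1 : IntervalIntegrable (fun t : ℝ => (t : ℂ) ^ (α + (n : ℂ) - 1)) volume 0 1 :=
        intervalIntegrable_cpow' (hre n)
      have h2 := (h1.const_mul (c n * x ^ (α + (n : ℂ))))
      rwa [intervalIntegrable_iff_integrableOn_Ioc_of_le (by norm_num : (0:ℝ) ≤ 1)] at h2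
    -- value of each integral
    have hval : ∀ n : ℕ, (∫ t in Ioc (0:ℝ) 1, F n t) = c n * x ^ (α + (n : ℂ)) / (α + n) := by
      intro n
      rw [setIntegral_congr_fun measurableSet_Ioc (hEq n),
        ← intervalIntegral.integral_of_le (by norm_num : (0:ℝ) ≤ 1)]
      rw [intervalIntegral.integral_const_mul, integral_cpow (Or.inl (hre n))]
      have : α + (n : ℂ) - 1 + 1 = α + n := by ring
      rw [this, Complex.ofReal_one, Complex.ofReal_zero, Complex.one_cpow,
        Complex.zero_cpow (hαn0 n), sub_zero, mul_one_div]
    -- summability of integrals of norms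
    have hnormval : ∀ n : ℕ, (∫ t in Ioc (0:ℝ) 1, ‖F n t‖)
        ≤ ‖x ^ α‖ / α.re * ‖c n * x ^ n‖ := by
      intro n
      have heq2 : ∀ t ∈ Ioc (0:ℝ) 1,
          ‖F n t‖ = ‖c n * x ^ (α + (n : ℂ))‖ * t ^ ((α + (n : ℂ) - 1).re) := by
        intro t ht
        rw [hEq n ht, norm_mul]
        congr 1
        rw [Complex.norm_cpow_eq_rpow_re_of_pos ht.1]
      rw [setIntegral_congr_fun measurableSet_Ioc heq2,
        ← intervalIntegral.integral_of_le (by norm_num : (0:ℝ) ≤ 1),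
        intervalIntegral.integral_const_mul, integral_rpow (Or.inl (by
          simpa using hre n))]
      have hrpos : (0:ℝ) < (α + (n : ℂ) - 1).re + 1 := by linarith [hre n]
      have hval2 : (α + (n : ℂ) - 1).re + 1 = α.re + n := by
        simp [Complex.sub_re, Complex.add_re, Complex.natCast_re]
      rw [Real.one_rpow, Real.zero_rpow hrpos.ne', sub_zero]
      have hxan : ‖c n * x ^ (α + (n : ℂ))‖ = ‖x ^ α‖ * ‖c n * x ^ n‖ := by
        rw [Complex.cpow_add _ _ hx0, Complex.cpow_natCast, norm_mul, norm_mul, norm_mul]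
        ring
      rw [hxan, hval2]
      have h1 : 1 / (α.re + n) ≤ 1 / α.re := by
        apply one_div_le_one_div_of_le hα
        have : (0:ℝ) ≤ n := Nat.cast_nonneg n
        linarith
      calc ‖x ^ α‖ * ‖c n * x ^ n‖ * (1 / (α.re + n))
          ≤ ‖x ^ α‖ * ‖c n * x ^ n‖ * (1 / α.re) := by
            apply mul_le_mul_of_nonneg_left h1 (by positivity)
        _ = ‖x ^ α‖ / α.re * ‖c n * x ^ n‖ := by ring
    have hsumnorm : Summable (fun n => ∫ t in Ioc (0:ℝ) 1, ‖F n t‖) := by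
      refine Summable.of_nonneg_of_le (fun n => ?_) hnormval (hsum.mul_left (‖x ^ α‖ / α.re))
      exact integral_nonneg (fun t => norm_nonneg _)
    have hHS : HasSum (fun n => ∫ t in Ioc (0:ℝ) 1, F n t)
        (∫ t in Ioc (0:ℝ) 1, ∑' n, F n t) :=
      hasSum_integral_of_summable_integral_norm hInt hsumnorm
    simp only [hval] at hHS
    have htsum : ∀ t : ℝ, (∑' n, F n t)
        = x * ((t : ℂ) * x) ^ (α - 1) * ∑' n : ℕ, c n * ((t : ℂ) * x) ^ n := by
      intro t
      exact tsum_mul_left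
    have hIval : (∫ t in (0:ℝ)..1,
        x * ((t : ℂ) * x) ^ (α - 1) * (∑' n : ℕ, c n * ((t : ℂ) * x) ^ n))
        = ∫ t in Ioc (0:ℝ) 1, ∑' n, F n t := by
      rw [intervalIntegral.integral_of_le (by norm_num : (0:ℝ) ≤ 1)]
      exact setIntegral_congr_fun measurableSet_Ioc (fun t _ => (htsum t).symm)
    rw [hIval]
    have hterm : ∀ n : ℕ, x ^ (-α) * (c n * x ^ (α + (n : ℂ)) / (α + n))
        = c n * x ^ n / ((n : ℂ) + α) := by
      intro n
      have h2 : x ^ (-α) * x ^ (α + (n : ℂ)) = x ^ n := by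
        rw [← Complex.cpow_add _ _ hx0, show -α + (α + (n : ℂ)) = ((n : ℕ) : ℂ) by ring,
          Complex.cpow_natCast]
      calc x ^ (-α) * (c n * x ^ (α + (n : ℂ)) / (α + n))
          = c n * (x ^ (-α) * x ^ (α + (n : ℂ))) / (α + n) := by ring
        _ = c n * x ^ n / ((n : ℂ) + α) := by rw [h2, add_comm α (n : ℂ)]
    have hHS2 := hHS.mul_left (x ^ (-α))
    simp only [hterm] at hHS2
    exact hHS2.tsum_eq
end

section
/- For Re α > -1, Re β > -1, the Jacobi polynomials on [0,1] satisfy ∫_0^1 p_n(x)^2 x^α(1-x)^β dx = n! Γ(n+α+1) Γ(n+β+1) / ((2n+α+β+1) Γ(n+α+β+1)). -/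
/-- The Jacobi polynomial on `[0,1]` via the Rodrigues formula. -/
noncomputable def jacobiP (α β : ℂ) (n : ℕ) (z : ℂ) : ℂ :=
  (z ^ α * (1 - z) ^ β)⁻¹ *
    iteratedDeriv n (fun w : ℂ => w ^ n * (1 - w) ^ n * (w ^ α * (1 - w) ^ β)) z

open Polynomial Complex Set MeasureTheory intervalIntegral

noncomputable def jQ (α β : ℂ) (n : ℕ) : ℕ → Polynomial ℂ
  | 0 => 1
  | (m+1) =>
      (Polynomial.C (α + ((n - m : ℕ) : ℂ)) * (1 - Polynomial.X)
        - Polynomial.C (β + ((n - m : ℕ) : ℂ)) * Polynomial.X) * jQ α β n m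
      + Polynomial.X * (1 - Polynomial.X) * Polynomial.derivative (jQ α β n m)

lemma jQ_natDegree (α β : ℂ) (n m : ℕ) : (jQ α β n m).natDegree ≤ m := by
  induction m with
  | zero => simp [jQ]
  | succ m ih =>
    rw [jQ]
    refine (natDegree_add_le _ _).trans (max_le ?_ ?_)
    · refine (natDegree_mul_le).trans ?_
      have h1 : (Polynomial.C (α + ((n - m : ℕ) : ℂ)) * (1 - Polynomial.X)
          - Polynomial.C (β + ((n - m : ℕ) : ℂ)) * Polynomial.X).natDegree ≤ 1 := by
        refine (natDegree_sub_le _ _).trans (max_le ?_ ?_)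
        · refine (natDegree_mul_le).trans ?_
          simp [natDegree_C]
          exact (natDegree_sub_le _ _).trans (by simp)
        · refine (natDegree_mul_le).trans (by simp)
      omega
    · by_cases hd : Polynomial.derivative (jQ α β n m) = 0
      · simp [hd]
      · have h2 : (Polynomial.derivative (jQ α β n m)).natDegree ≤ m - 1 :=
          (natDegree_derivative_le _).trans (Nat.sub_le_sub_right ih 1)
        have hm : 1 ≤ m := by
          by_contra h
          have : m = 0 := by omega
          subst this
          have := Polynomial.natDegree_eq_zero.mp (Nat.le_zero.mp ih)
          obtain ⟨c, hc⟩ := this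
          rw [← hc] at hd
          simp at hd
        refine (natDegree_mul_le).trans ?_
        have h3 : (Polynomial.X * (1 - Polynomial.X) : Polynomial ℂ).natDegree ≤ 2 := by
          refine natDegree_mul_le.trans ?_
          have : (1 - Polynomial.X : Polynomial ℂ).natDegree ≤ 1 := (natDegree_sub_le _ _).trans (by simp)
          simp
          omega
        omega

lemma jQ_coeff (α β : ℂ) (n : ℕ) : ∀ m, m ≤ n →
    (jQ α β n m).coeff m = ∏ i ∈ Finset.range m, (-(α + β + ((2*n - i : ℕ) : ℂ))) := by
  intro m
  induction m with
  | zero => simp [jQ]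
  | succ m ih =>
    intro hm
    have hm' : m ≤ n := by omega
    have ihc := ih hm'
    set Q := jQ α β n m with hQ
    set a := α + ((n - m : ℕ) : ℂ) with ha
    set b := β + ((n - m : ℕ) : ℂ) with hb
    have hdeg : Q.natDegree ≤ m := jQ_natDegree α β n m
    have e1 : jQ α β n (m+1) = Polynomial.C a * Q - (Polynomial.C a + Polynomial.C b) * (Polynomial.X * Q)
        + (Polynomial.X * Polynomial.derivative Q - Polynomial.X * (Polynomial.X * Polynomial.derivative Q)) := by
      rw [jQ]; ring
    have hc1 : Q.coeff (m+1) = 0 := coeff_eq_zero_of_natDegree_lt (by omega)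
    have hc2 : (Polynomial.derivative Q).coeff m = 0 := by
      rw [Polynomial.coeff_derivative, hc1, zero_mul]
    have hc3 : (Polynomial.X * Polynomial.derivative Q).coeff m = (m : ℂ) * Q.coeff m := by
      cases m with
      | zero =>
        simp [Polynomial.mul_coeff_zero]
      | succ k =>
        rw [Polynomial.coeff_X_mul, Polynomial.coeff_derivative]
        push_cast
        ring
    rw [e1]
    simp only [Polynomial.coeff_add, Polynomial.coeff_sub, Polynomial.coeff_C_mul,
      Polynomial.coeff_X_mul, Polynomial.coeff_add, ← Polynomial.C_add, Polynomial.coeff_C_mul]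
    rw [hc1, hc2, hc3, ihc, Finset.prod_range_succ]
    have hcast : ((n - m : ℕ) : ℂ) = (n : ℂ) - m := by
      rw [Nat.cast_sub hm']
    have hcast2 : ((2*n - m : ℕ) : ℂ) = 2*(n:ℂ) - m := by
      rw [Nat.cast_sub (by omega)]; push_cast; ring
    rw [ha, hb, hcast, hcast2]
    ring

lemma jW_hasDerivAt (α β : ℂ) (n k : ℕ) (hk : k < n) {z : ℂ} (hz0 : 0 < z.re) (hz1 : z.re < 1) :
    HasDerivAt (fun w : ℂ => w ^ (α + ((n - k : ℕ) : ℂ)) * (1 - w) ^ (β + ((n - k : ℕ) : ℂ))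
        * (jQ α β n k).eval w)
      (z ^ (α + ((n - (k+1) : ℕ) : ℂ)) * (1 - z) ^ (β + ((n - (k+1) : ℕ) : ℂ))
        * (jQ α β n (k+1)).eval z) z := by
  have hz : z ≠ 0 := by
    intro h; rw [h] at hz0; simp at hz0
  have hz1' : (1 : ℂ) - z ≠ 0 := by
    intro h
    rw [sub_eq_zero] at h
    rw [← h] at hz1
    simp at hz1
  have hsp : z ∈ Complex.slitPlane := Complex.mem_slitPlane_iff.mpr (Or.inl hz0)
  have hsp2 : (1 : ℂ) - z ∈ Complex.slitPlane := by
    refine Complex.mem_slitPlane_iff.mpr (Or.inl ?_)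
    simp [Complex.sub_re]; linarith
  set a := α + ((n - k : ℕ) : ℂ) with ha
  set b := β + ((n - k : ℕ) : ℂ) with hb
  have U : HasDerivAt (fun w : ℂ => w ^ a) (a * z ^ (a - 1)) z :=
    (Complex.hasStrictDerivAt_cpow_const hsp).hasDerivAt
  have V : HasDerivAt (fun w : ℂ => (1 - w) ^ b) (b * (1 - z) ^ (b - 1) * (-1)) z :=
    HasDerivAt.cpow_const ((hasDerivAt_id z).const_sub 1) hsp2
  have W : HasDerivAt (fun w : ℂ => (jQ α β n k).eval w)
      ((Polynomial.derivative (jQ α β n k)).eval z) z := (jQ α β n k).hasDerivAt z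
  have total := (U.mul V).mul W
  refine HasDerivAt.congr_deriv total ?_
  have e1 : z ^ a = z ^ (a - 1) * z := by
    nth_rewrite 1 [show a = (a - 1) + 1 by ring]
    rw [Complex.cpow_add _ _ hz, Complex.cpow_one]
  have e2 : (1 - z) ^ b = (1 - z) ^ (b - 1) * (1 - z) := by
    nth_rewrite 1 [show b = (b - 1) + 1 by ring]
    rw [Complex.cpow_add _ _ hz1', Complex.cpow_one]
  have e3 : α + ((n - (k+1) : ℕ) : ℂ) = a - 1 := by
    rw [ha]
    rw [show (n - (k+1) : ℕ) = (n - k) - 1 by omega, Nat.cast_sub (by omega : 1 ≤ n - k)]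
    push_cast; ring
  have e4 : β + ((n - (k+1) : ℕ) : ℂ) = b - 1 := by
    rw [hb]
    rw [show (n - (k+1) : ℕ) = (n - k) - 1 by omega, Nat.cast_sub (by omega : 1 ≤ n - k)]
    push_cast; ring
  simp only [Pi.mul_apply]
  rw [e3, e4, e1, e2]
  show _ = _
  rw [jQ]
  simp only [Polynomial.eval_add, Polynomial.eval_mul, Polynomial.eval_sub, Polynomial.eval_one,
    Polynomial.eval_X, Polynomial.eval_C, Polynomial.derivative_add, Polynomial.derivative_mul]
  rw [← ha, ← hb]
  ring

lemma jIter (α β : ℂ) (n : ℕ) : ∀ m, m ≤ n → ∀ z : ℂ, 0 < z.re → z.re < 1 →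
    iteratedDeriv m (fun w : ℂ => w ^ n * (1 - w) ^ n * (w ^ α * (1 - w) ^ β)) z
      = z ^ (α + ((n - m : ℕ) : ℂ)) * (1 - z) ^ (β + ((n - m : ℕ) : ℂ)) * (jQ α β n m).eval z := by
  intro m
  induction m with
  | zero =>
    intro _ z hz0 hz1
    have hz : z ≠ 0 := by intro h; rw [h] at hz0; simp at hz0
    rw [iteratedDeriv_zero]
    simp only [Nat.sub_zero, jQ, Polynomial.eval_one, mul_one]
    rw [Complex.cpow_add _ _ hz, Complex.cpow_natCast]
    have hz1' : (1 : ℂ) - z ≠ 0 := by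
      intro h; rw [sub_eq_zero] at h; rw [← h] at hz1; simp at hz1
    rw [Complex.cpow_add _ _ hz1', Complex.cpow_natCast]
    ring
  | succ m ih =>
    intro hm z hz0 hz1
    have hm' : m ≤ n := by omega
    rw [iteratedDeriv_succ]
    have hS : IsOpen {w : ℂ | 0 < w.re ∧ w.re < 1} :=
      (isOpen_lt continuous_const Complex.continuous_re).inter
        (isOpen_lt Complex.continuous_re continuous_const)
    have hmem : {w : ℂ | 0 < w.re ∧ w.re < 1} ∈ nhds z := hS.mem_nhds ⟨hz0, hz1⟩
    have heq : iteratedDeriv m (fun w : ℂ => w ^ n * (1 - w) ^ n * (w ^ α * (1 - w) ^ β))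
        =ᶠ[nhds z] fun w : ℂ => w ^ (α + ((n - m : ℕ) : ℂ)) * (1 - w) ^ (β + ((n - m : ℕ) : ℂ))
          * (jQ α β n m).eval w := by
      filter_upwards [hmem] with w hw
      exact ih hm' w hw.1 hw.2
    rw [heq.deriv_eq]
    exact (jW_hasDerivAt α β n m (by omega) hz0 hz1).deriv

noncomputable def jV (α β : ℂ) (n k : ℕ) (x : ℝ) : ℂ :=
  (x:ℂ) ^ (α + ((n - k : ℕ):ℂ)) * (1 - (x:ℂ)) ^ (β + ((n - k : ℕ):ℂ)) * (jQ α β n k).eval (x:ℂ)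

lemma jV_hasDerivAt (α β : ℂ) (n k : ℕ) (hk : k < n) {x : ℝ} (hx : x ∈ Ioo (0:ℝ) 1) :
    HasDerivAt (jV α β n k) (jV α β n (k+1) x) x := by
  have h := (jW_hasDerivAt α β n k hk (z := (x:ℂ))
    (by simpa using hx.1) (by simpa using hx.2)).comp_ofReal
  exact h

lemma jV_re_pos (α : ℂ) (hα : -1 < α.re) (n k : ℕ) (hk : k < n) :
    0 < (α + ((n - k : ℕ):ℂ)).re := by
  have : (1:ℝ) ≤ ((n - k : ℕ) : ℝ) := by
    have : 1 ≤ n - k := by omega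
    exact_mod_cast this
  simp only [Complex.add_re, Complex.natCast_re]
  linarith

lemma jV_continuousOn (α β : ℂ) (hα : -1 < α.re) (hβ : -1 < β.re) (n k : ℕ) (hk : k < n) :
    ContinuousOn (jV α β n k) (Icc (0:ℝ) 1) := by
  refine ContinuousOn.mul (ContinuousOn.mul ?_ ?_) ?_
  · refine continuousOn_of_forall_continuousAt fun x hx => ?_
    refine (continuousAt_cpow_const_of_re_pos (Or.inl ?_) (jV_re_pos α hα n k hk)).comp
      Complex.continuous_ofReal.continuousAt
    rw [Complex.ofReal_re]; exact hx.1
  · refine continuousOn_of_forall_continuousAt fun x hx => ?_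
    refine (continuousAt_cpow_const_of_re_pos (Or.inl ?_) (jV_re_pos β hβ n k hk)).comp
      (continuous_const.sub Complex.continuous_ofReal).continuousAt
    rw [Complex.sub_re, Complex.one_re, Complex.ofReal_re, sub_nonneg]; exact hx.2
  · exact (((jQ α β n k).continuous).comp Complex.continuous_ofReal).continuousOn

lemma jV_zero (α β : ℂ) (hα : -1 < α.re) (n k : ℕ) (hk : k < n) : jV α β n k 0 = 0 := by
  have h := jV_re_pos α hα n k hk
  rw [jV]
  rw [Complex.ofReal_zero, Complex.zero_cpow (by intro hc; rw [hc] at h; simp at h)]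
  ring

lemma jV_one (α β : ℂ) (hβ : -1 < β.re) (n k : ℕ) (hk : k < n) : jV α β n k 1 = 0 := by
  have h := jV_re_pos β hβ n k hk
  rw [jV]
  rw [Complex.ofReal_one, sub_self, Complex.zero_cpow (by intro hc; rw [hc] at h; simp at h)]
  ring

lemma jV_intervalIntegrable (α β : ℂ) (hα : -1 < α.re) (hβ : -1 < β.re) (n k : ℕ)
    (P : Polynomial ℂ) :
    IntervalIntegrable (fun x => P.eval (x:ℂ) * jV α β n k x) volume 0 1 := by
  have hu : 0 < (α + ((n - k : ℕ):ℂ) + 1).re := by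
    simp only [Complex.add_re, Complex.natCast_re, Complex.one_re]
    have : (0:ℝ) ≤ ((n - k : ℕ) : ℝ) := by positivity
    linarith
  have hv : 0 < (β + ((n - k : ℕ):ℂ) + 1).re := by
    simp only [Complex.add_re, Complex.natCast_re, Complex.one_re]
    have : (0:ℝ) ≤ ((n - k : ℕ) : ℝ) := by positivity
    linarith
  have hbeta := Complex.betaIntegral_convergent hu hv
  simp only [add_sub_cancel_right] at hbeta
  have := hbeta.mul_continuousOn (g := fun x : ℝ => (jQ α β n k).eval (x:ℂ) * P.eval (x:ℂ))
    (((((jQ α β n k).continuous).comp Complex.continuous_ofReal).mul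
      (((P).continuous).comp Complex.continuous_ofReal)).continuousOn)
  convert this using 2 with x
  rw [jV]
  ring

lemma jacobiP_eq (α β : ℂ) (n : ℕ) {x : ℝ} (hx : x ∈ Ioo (0:ℝ) 1) :
    jacobiP α β n (x:ℂ) = (jQ α β n n).eval (x:ℂ) := by
  have hx0 : (0:ℝ) < x := hx.1
  have hx1 : x < 1 := hx.2
  have h := jIter α β n n le_rfl (x:ℂ) (by simpa using hx0) (by simpa using hx1)
  rw [jacobiP, h]
  simp only [Nat.sub_self, Nat.cast_zero, add_zero]
  have h1 : ((x:ℂ)) ^ α ≠ 0 := by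
    rw [Ne, Complex.cpow_eq_zero_iff]
    push_neg
    intro hc
    exact absurd (Complex.ofReal_eq_zero.mp hc) (by linarith)
  have h2 : ((1:ℂ) - (x:ℂ)) ^ β ≠ 0 := by
    rw [Ne, Complex.cpow_eq_zero_iff]
    push_neg
    intro hc
    rw [sub_eq_zero] at hc
    have : (1:ℝ) = x := by exact_mod_cast hc
    linarith
  field_simp

lemma jParts (α β : ℂ) (hα : -1 < α.re) (hβ : -1 < β.re) (n m : ℕ) (hm : m < n) :
    (∫ x in (0:ℝ)..1, (Polynomial.derivative^[m] (jQ α β n n)).eval (x:ℂ) * jV α β n (n - m) x)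
      = - ∫ x in (0:ℝ)..1,
          (Polynomial.derivative^[m+1] (jQ α β n n)).eval (x:ℂ) * jV α β n (n - (m+1)) x := by
  set k := n - (m+1) with hk
  have hkn : k < n := by omega
  have hk1 : n - m = k + 1 := by omega
  rw [hk1]
  set P := Polynomial.derivative^[m] (jQ α β n n) with hP
  have hP' : Polynomial.derivative^[m+1] (jQ α β n n) = Polynomial.derivative P := by
    rw [hP, Function.iterate_succ_apply']
  rw [hP']
  set G : ℝ → ℂ := fun x => P.eval (x:ℂ) * jV α β n k x with hG
  have hcont : ContinuousOn G (Icc (0:ℝ) 1) :=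
    ((P.continuous.comp Complex.continuous_ofReal).continuousOn).mul
      (jV_continuousOn α β hα hβ n k hkn)
  have hderiv : ∀ x ∈ Ioo (0:ℝ) 1, HasDerivAt G
      ((Polynomial.derivative P).eval (x:ℂ) * jV α β n k x + P.eval (x:ℂ) * jV α β n (k+1) x) x := by
    intro x hx
    exact ((P.hasDerivAt (x:ℂ)).comp_ofReal).mul (jV_hasDerivAt α β n k hkn hx)
  have hint1 := jV_intervalIntegrable α β hα hβ n k (Polynomial.derivative P)
  have hint2 := jV_intervalIntegrable α β hα hβ n (k+1) P
  have hint := hint1.add hint2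
  have int_ev := intervalIntegral.integral_eq_sub_of_hasDerivAt_of_le zero_le_one hcont hderiv hint
  rw [hG] at int_ev
  simp only at int_ev
  rw [jV_zero α β hα n k hkn, jV_one α β hβ n k hkn, mul_zero, mul_zero, sub_zero] at int_ev
  rw [intervalIntegral.integral_add hint1 hint2] at int_ev
  linear_combination int_ev

lemma jChain (α β : ℂ) (hα : -1 < α.re) (hβ : -1 < β.re) (n : ℕ) : ∀ m, m ≤ n →
    (∫ x in (0:ℝ)..1, (jQ α β n n).eval (x:ℂ) * jV α β n n x)
      = (-1)^m * ∫ x in (0:ℝ)..1,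
          (Polynomial.derivative^[m] (jQ α β n n)).eval (x:ℂ) * jV α β n (n-m) x := by
  intro m
  induction m with
  | zero => simp
  | succ m ih =>
    intro hm
    rw [ih (by omega), jParts α β hα hβ n m (by omega)]
    ring

lemma GammaProd (z : ℂ) (hz : ∀ i : ℕ, z + i ≠ 0) (k : ℕ) :
    Complex.Gamma (z + k) = Complex.Gamma z * ∏ i ∈ Finset.range k, (z + i) := by
  induction k with
  | zero => simp
  | succ k ih =>
    have : z + ((k:ℕ)+1 : ℕ) = (z + k) + 1 := by push_cast; ring
    rw [this, Complex.Gamma_add_one _ (hz k), ih, Finset.prod_range_succ]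
    ring

lemma jJn (α β : ℂ) (n : ℕ) :
    (∫ x in (0:ℝ)..1, (Polynomial.derivative^[n] (jQ α β n n)).eval (x:ℂ) * jV α β n (n-n) x)
      = ((n.factorial : ℂ) * (jQ α β n n).coeff n)
          * Complex.betaIntegral (α + n + 1) (β + n + 1) := by
  have hdeg : (Polynomial.derivative^[n] (jQ α β n n)).natDegree ≤ 0 := by
    refine (Polynomial.natDegree_iterate_derivative _ _).trans ?_
    have := jQ_natDegree α β n n
    omega
  have hc0 : (Polynomial.derivative^[n] (jQ α β n n)).coeff 0
      = (n.factorial : ℂ) * (jQ α β n n).coeff n := by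
    rw [Polynomial.coeff_iterate_derivative]
    simp [Nat.descFactorial_self, nsmul_eq_mul]
  have hC : Polynomial.derivative^[n] (jQ α β n n)
      = Polynomial.C ((n.factorial : ℂ) * (jQ α β n n).coeff n) := by
    rw [Polynomial.eq_C_of_natDegree_le_zero hdeg, hc0]
  rw [hC]
  simp only [Polynomial.eval_C, Nat.sub_self]
  rw [intervalIntegral.integral_const_mul]
  congr 1
  rw [Complex.betaIntegral]
  refine intervalIntegral.integral_congr fun x _ => ?_
  rw [jV]
  simp only [Nat.sub_zero, jQ, Polynomial.eval_one, mul_one, add_sub_cancel_right]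

lemma jInt (α β : ℂ) (hα : -1 < α.re) (hβ : -1 < β.re)
    (hαβ : ∀ m : ℕ, α + β + 1 ≠ -(m : ℂ)) (n : ℕ) :
    (∫ x in (0:ℝ)..1, (jQ α β n n).eval (x:ℂ) * jV α β n n x)
      = (n.factorial : ℂ) * Complex.Gamma ((n : ℂ) + α + 1) * Complex.Gamma ((n : ℂ) + β + 1)
        / ((2 * (n : ℂ) + α + β + 1) * Complex.Gamma ((n : ℂ) + α + β + 1)) := by
  rw [jChain α β hα hβ n n le_rfl, jJn α β n, jQ_coeff α β n n le_rfl]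
  have hneg : (∏ i ∈ Finset.range n, (-(α + β + ((2*n - i : ℕ) : ℂ))))
      = (-1)^n * ∏ i ∈ Finset.range n, (α + β + ((2*n - i : ℕ) : ℂ)) := by
    rw [show (fun i => -(α + β + ((2*n - i : ℕ) : ℂ))) = fun i => (-1) * (α + β + ((2*n - i : ℕ) : ℂ)) from by funext i; ring]
    rw [Finset.prod_mul_distrib, Finset.prod_const, Finset.card_range]
  rw [hneg]
  -- reindex the product
  have hprod : (∏ i ∈ Finset.range n, (α + β + ((2*n - i : ℕ) : ℂ)))
      = ∏ j ∈ Finset.range n, ((α + β + (n:ℂ) + 1) + (j:ℂ)) := by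
    rw [← Finset.prod_range_reflect (fun j => (α + β + (n:ℂ) + 1) + (j:ℂ)) n]
    refine Finset.prod_congr rfl fun i hi => ?_
    have hi' : i < n := Finset.mem_range.mp hi
    have : (2*n - i : ℕ) = (n + 1) + (n - 1 - i) := by omega
    rw [this]
    push_cast
    ring
  have hz : ∀ i : ℕ, (α + β + (n:ℂ) + 1) + (i:ℂ) ≠ 0 := by
    intro i h
    apply hαβ (n + i)
    push_cast
    linear_combination h
  have hGam := GammaProd (α + β + (n:ℂ) + 1) hz n
  have harg : (α + β + (n:ℂ) + 1) + (n:ℂ) = α + β + 2*(n:ℂ) + 1 := by ring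
  rw [harg] at hGam
  have hG1 : Complex.Gamma (α + β + (n:ℂ) + 1) ≠ 0 := by
    refine Complex.Gamma_ne_zero fun m h => ?_
    apply hαβ (n + m)
    push_cast
    linear_combination h
  have hG2 : Complex.Gamma (α + β + 2*(n:ℂ) + 1) ≠ 0 := by
    refine Complex.Gamma_ne_zero fun m h => ?_
    apply hαβ (2*n + m)
    push_cast
    linear_combination h
  have hw : (α + β + 2*(n:ℂ) + 1) ≠ 0 := by
    intro h
    apply hαβ (2*n)
    push_cast
    linear_combination h
  -- beta integral value
  have hs : 0 < (α + (n:ℂ) + 1).re := by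
    simp only [Complex.add_re, Complex.natCast_re, Complex.one_re]
    have : (0:ℝ) ≤ (n:ℝ) := by positivity
    linarith
  have ht : 0 < (β + (n:ℂ) + 1).re := by
    simp only [Complex.add_re, Complex.natCast_re, Complex.one_re]
    have : (0:ℝ) ≤ (n:ℝ) := by positivity
    linarith
  have hbeta := Complex.Gamma_mul_Gamma_eq_betaIntegral hs ht
  have harg2 : (α + (n:ℂ) + 1) + (β + (n:ℂ) + 1) = (α + β + 2*(n:ℂ) + 1) + 1 := by ring
  rw [harg2, Complex.Gamma_add_one _ hw] at hbeta
  -- normalize Gamma arguments on the RHS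
  rw [show ((n:ℂ) + α + 1) = α + (n:ℂ) + 1 from by ring,
    show ((n:ℂ) + β + 1) = β + (n:ℂ) + 1 from by ring,
    show ((n:ℂ) + α + β + 1) = α + β + (n:ℂ) + 1 from by ring,
    show (2 * (n:ℂ) + α + β + 1) = α + β + 2*(n:ℂ) + 1 from by ring]
  have hsq : ((-1:ℂ))^n * (-1)^n = 1 := by
    rw [← mul_pow]; norm_num
  rw [show ((-1:ℂ))^n * (((n.factorial : ℂ) * ((-1)^n * ∏ i ∈ Finset.range n, (α + β + ((2*n - i : ℕ) : ℂ))))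
        * Complex.betaIntegral (α + (n:ℂ) + 1) (β + (n:ℂ) + 1))
      = ((-1:ℂ))^n * (-1)^n * ((n.factorial : ℂ) * (∏ i ∈ Finset.range n, (α + β + ((2*n - i : ℕ) : ℂ)))
        * Complex.betaIntegral (α + (n:ℂ) + 1) (β + (n:ℂ) + 1)) from by ring, hsq, one_mul, hprod]
  rw [eq_div_iff (mul_ne_zero hw hG1)]
  linear_combination (-(n.factorial:ℂ) * Complex.betaIntegral (α + (n:ℂ) + 1) (β + (n:ℂ) + 1)
      * (α + β + 2*(n:ℂ) + 1)) * hGam - (n.factorial:ℂ) * hbeta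

/-- For `Re α > -1`, `Re β > -1` (and `α+β+1` not a nonpositive integer),
`∫_0^1 pₙ(x)² x^α(1-x)^β dx = n! Γ(n+α+1) Γ(n+β+1) / ((2n+α+β+1) Γ(n+α+β+1))`. -/
theorem jacobi_norm (α β : ℂ) (hα : -1 < α.re) (hβ : -1 < β.re)
    (hαβ : ∀ m : ℕ, α + β + 1 ≠ -(m : ℂ)) (n : ℕ) :
    ∫ x in (0:ℝ)..1, (jacobiP α β n (x : ℂ)) ^ 2 * ((x : ℂ) ^ α * (1 - (x : ℂ)) ^ β)
      = (n.factorial : ℂ) * Complex.Gamma ((n : ℂ) + α + 1) * Complex.Gamma ((n : ℂ) + β + 1)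
        / ((2 * (n : ℂ) + α + β + 1) * Complex.Gamma ((n : ℂ) + α + β + 1)) := by
  have key := jInt α β hα hβ hαβ n
  rw [← key]
  rw [intervalIntegral.integral_of_le zero_le_one, intervalIntegral.integral_of_le zero_le_one]
  rw [MeasureTheory.integral_Ioc_eq_integral_Ioo, MeasureTheory.integral_Ioc_eq_integral_Ioo]
  refine MeasureTheory.setIntegral_congr_fun measurableSet_Ioo fun x hx => ?_
  rw [show (jacobiP α β n (x : ℂ)) ^ 2 * ((x : ℂ) ^ α * (1 - (x : ℂ)) ^ β)
      = jacobiP α β n (x : ℂ) * (jacobiP α β n (x : ℂ) * ((x : ℂ) ^ α * (1 - (x : ℂ)) ^ β))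
    from by ring]
  rw [jacobiP_eq α β n hx, jV]
  simp only [Nat.sub_self, Nat.cast_zero, add_zero]
  ring
end

section
/- For Re α > -1, Re β > -1 and n ≥ 1, integrating by parts gives ∫_0^1 [x^n(1-x)^n w(x)]^{(n)} x^n dx = (-1)^n n! ∫_0^1 x^{n+α}(1-x)^{n+β} dx, where w(x) = x^α(1-x)^β and the superscript (n) denotes the n-th derivative; all boundary terms vanish. -/
open Complex MeasureTheory Filter Topology Set intervalIntegral Polynomial

noncomputable def rodQ (α β : ℂ) (n : ℕ) : ℕ → Polynomial ℂ
  | 0 => 1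
  | (k+1) => Polynomial.C ((n : ℂ) + α - k) * (1 - Polynomial.X) * rodQ α β n k
      - Polynomial.C ((n : ℂ) + β - k) * Polynomial.X * rodQ α β n k
      + Polynomial.X * (1 - Polynomial.X) * (rodQ α β n k).derivative

noncomputable def rodG (α β : ℂ) (n k : ℕ) : ℂ → ℂ :=
  fun z => z ^ ((n : ℂ) + α - k) * (1 - z) ^ ((n : ℂ) + β - k) * (rodQ α β n k).eval z

def rodV : Set ℂ := Complex.slitPlane ∩ ((fun z => 1 - z) ⁻¹' Complex.slitPlane)

lemma rodV_open : IsOpen rodV :=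
  Complex.isOpen_slitPlane.inter
    (Complex.isOpen_slitPlane.preimage (continuous_const.sub continuous_id))

lemma mem_rodV {x : ℝ} (hx : x ∈ Set.Ioo (0:ℝ) 1) : (x : ℂ) ∈ rodV := by
  constructor
  · exact Complex.ofReal_mem_slitPlane.2 hx.1
  · show (1 : ℂ) - (x : ℂ) ∈ Complex.slitPlane
    have : ((1 - x : ℝ) : ℂ) = 1 - (x : ℂ) := by push_cast; ring
    rw [← this]
    exact Complex.ofReal_mem_slitPlane.2 (by linarith [hx.2])

lemma rodV_ne_zero {z : ℂ} (hz : z ∈ rodV) : z ≠ 0 := Complex.slitPlane_ne_zero hz.1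

lemma rodV_one_sub_ne_zero {z : ℂ} (hz : z ∈ rodV) : (1 : ℂ) - z ≠ 0 :=
  Complex.slitPlane_ne_zero hz.2

lemma hasDerivAt_rodG (α β : ℂ) (n k : ℕ) {z : ℂ} (hz : z ∈ rodV) :
    HasDerivAt (rodG α β n k) (rodG α β n (k+1) z) z := by
  have hz0 : z ≠ 0 := rodV_ne_zero hz
  have hz1 : (1 : ℂ) - z ≠ 0 := rodV_one_sub_ne_zero hz
  set a : ℂ := (n : ℂ) + α - k with ha
  set b : ℂ := (n : ℂ) + β - k with hb
  have h1 : HasDerivAt (fun w : ℂ => w ^ a) (a * z ^ (a - 1) * 1) z :=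
    (hasDerivAt_id z).cpow_const hz.1
  have h2 : HasDerivAt (fun w : ℂ => (1 - w) ^ b) (b * (1 - z) ^ (b - 1) * (0 - 1)) z :=
    ((hasDerivAt_const z (1:ℂ)).sub (hasDerivAt_id z)).cpow_const hz.2
  have h3 : HasDerivAt (fun w : ℂ => (rodQ α β n k).eval w)
      ((rodQ α β n k).derivative.eval z) z := (rodQ α β n k).hasDerivAt z
  have H := (h1.mul h2).mul h3
  have ea : z ^ a = z ^ (a - 1) * z := by
    conv_lhs => rw [show a = a - 1 + 1 by ring]
    rw [Complex.cpow_add _ _ hz0, Complex.cpow_one]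
  have eb : (1 - z) ^ b = (1 - z) ^ (b - 1) * (1 - z) := by
    conv_lhs => rw [show b = b - 1 + 1 by ring]
    rw [Complex.cpow_add _ _ hz1, Complex.cpow_one]
  have hval : (a * z ^ (a - 1) * 1 * (1 - z) ^ b + z ^ a * (b * (1 - z) ^ (b - 1) * (0 - 1)))
        * (rodQ α β n k).eval z + z ^ a * (1 - z) ^ b * (rodQ α β n k).derivative.eval z
      = rodG α β n (k+1) z := by
    have hcast : ((k + 1 : ℕ) : ℂ) = (k : ℂ) + 1 := by push_cast; ring
    rw [rodG, rodQ, hcast]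
    have ea1 : (n : ℂ) + α - ((k : ℂ) + 1) = a - 1 := by rw [ha]; ring
    have eb1 : (n : ℂ) + β - ((k : ℂ) + 1) = b - 1 := by rw [hb]; ring
    rw [ea1, eb1, ea, eb]
    simp only [eval_add, eval_sub, eval_mul, eval_C, eval_X, eval_one]
    rw [ha, hb]
    ring
  have Hfun : (fun w : ℂ => w ^ a * (1 - w) ^ b * (rodQ α β n k).eval w) = rodG α β n k := rfl
  rw [← hval]
  exact H

lemma iteratedDeriv_rodG (α β : ℂ) (n k : ℕ) {z : ℂ} (hz : z ∈ rodV) :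
    iteratedDeriv k (rodG α β n 0) z = rodG α β n k z := by
  induction k generalizing z with
  | zero => simp
  | succ k ih =>
    rw [iteratedDeriv_succ]
    have hev : iteratedDeriv k (rodG α β n 0) =ᶠ[𝓝 z] rodG α β n k := by
      filter_upwards [rodV_open.mem_nhds hz] with w hw using ih hw
    rw [hev.deriv_eq]
    exact (hasDerivAt_rodG α β n k hz).deriv

lemma rodF_eq_rodG (α β : ℂ) (n : ℕ) {z : ℂ} (hz : z ∈ rodV) :
    z ^ n * (1 - z) ^ n * (z ^ α * (1 - z) ^ β) = rodG α β n 0 z := by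
  have hz0 : z ≠ 0 := rodV_ne_zero hz
  have hz1 : (1 : ℂ) - z ≠ 0 := rodV_one_sub_ne_zero hz
  rw [rodG, rodQ]
  simp only [Nat.cast_zero, sub_zero, eval_one, mul_one]
  rw [Complex.cpow_add _ _ hz0, Complex.cpow_add _ _ hz1,
    Complex.cpow_natCast, Complex.cpow_natCast]
  ring

lemma iteratedDeriv_rodF (α β : ℂ) (n k : ℕ) {z : ℂ} (hz : z ∈ rodV) :
    iteratedDeriv k (fun z : ℂ => z ^ n * (1 - z) ^ n * (z ^ α * (1 - z) ^ β)) z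
      = rodG α β n k z := by
  rw [← iteratedDeriv_rodG α β n k hz]
  apply Filter.EventuallyEq.iteratedDeriv_eq
  filter_upwards [rodV_open.mem_nhds hz] with w hw using rodF_eq_rodG α β n hw

lemma cpow_tendsto_zero (c : ℂ) (hc : 0 < c.re) :
    Tendsto (fun x : ℝ => (x : ℂ) ^ c) (𝓝[>] (0:ℝ)) (𝓝 0) := by
  rw [tendsto_zero_iff_norm_tendsto_zero]
  have heq : ∀ᶠ (x : ℝ) in 𝓝[>] (0:ℝ), ‖(x : ℂ) ^ c‖ = x ^ c.re := by
    filter_upwards [self_mem_nhdsWithin] with x hx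
    rw [Complex.norm_cpow_eq_rpow_re_of_pos hx]
  rw [tendsto_congr' heq]
  have h := (Real.continuousAt_rpow_const 0 c.re (Or.inr hc.le)).tendsto.mono_left
    (nhdsWithin_le_nhds (s := Set.Ioi (0:ℝ)))
  rwa [Real.zero_rpow hc.ne'] at h

lemma rodG_tendsto_zero_at_zero (α β : ℂ) (n k m : ℕ)
    (hpos : 0 < ((n : ℂ) + α - k).re) :
    Tendsto (fun x : ℝ => rodG α β n k x * (x : ℂ) ^ m) (𝓝[>] (0:ℝ)) (𝓝 0) := by
  have h1 := cpow_tendsto_zero ((n : ℂ) + α - k) hpos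
  have c2 : ContinuousAt (fun x : ℝ =>
      ((1 : ℂ) - x) ^ ((n : ℂ) + β - k) * (rodQ α β n k).eval (x : ℂ) * (x : ℂ) ^ m) 0 := by
    apply ContinuousAt.mul
    apply ContinuousAt.mul
    · apply ContinuousAt.cpow
      · exact (continuous_const.sub Complex.continuous_ofReal).continuousAt
      · exact continuousAt_const
      · simp [Complex.one_mem_slitPlane]
    · exact ((rodQ α β n k).continuous_aeval.continuousAt).comp
        Complex.continuous_ofReal.continuousAt
    · exact (Complex.continuous_ofReal.pow m).continuousAt
  have h2 := c2.tendsto.mono_left (nhdsWithin_le_nhds (s := Set.Ioi (0:ℝ)))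
  have := h1.mul h2
  rw [zero_mul] at this
  apply this.congr
  intro x
  rw [rodG]
  ring

lemma rodG_tendsto_zero_at_one (α β : ℂ) (n k m : ℕ)
    (hpos : 0 < ((n : ℂ) + β - k).re) :
    Tendsto (fun x : ℝ => rodG α β n k x * (x : ℂ) ^ m) (𝓝[<] (1:ℝ)) (𝓝 0) := by
  have hsub : Tendsto (fun x : ℝ => 1 - x) (𝓝[<] (1:ℝ)) (𝓝[>] (0:ℝ)) := by
    apply tendsto_nhdsWithin_of_tendsto_nhds_of_eventually_within
    · have : Tendsto (fun x : ℝ => 1 - x) (𝓝 (1:ℝ)) (𝓝 (1 - 1)) :=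
        (continuous_const.sub continuous_id).tendsto 1
      simpa using this.mono_left nhdsWithin_le_nhds
    · filter_upwards [self_mem_nhdsWithin] with x hx
      simp only [Set.mem_Iio] at hx
      simp [Set.mem_Ioi]; linarith
  have h1 : Tendsto (fun x : ℝ => ((1:ℂ) - x) ^ ((n : ℂ) + β - k)) (𝓝[<] (1:ℝ)) (𝓝 0) := by
    have := (cpow_tendsto_zero ((n : ℂ) + β - k) hpos).comp hsub
    apply this.congr
    intro x
    simp only [Function.comp_apply]
    norm_cast
  have c2 : ContinuousAt (fun x : ℝ =>
      (x : ℂ) ^ ((n : ℂ) + α - k) * (rodQ α β n k).eval (x : ℂ) * (x : ℂ) ^ m) 1 := by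
    apply ContinuousAt.mul
    apply ContinuousAt.mul
    · apply ContinuousAt.cpow
      · exact Complex.continuous_ofReal.continuousAt
      · exact continuousAt_const
      · simp [Complex.one_mem_slitPlane]
    · exact ((rodQ α β n k).continuous_aeval.continuousAt).comp
        Complex.continuous_ofReal.continuousAt
    · exact (Complex.continuous_ofReal.pow m).continuousAt
  have h2 := c2.tendsto.mono_left (nhdsWithin_le_nhds (s := Set.Iio (1:ℝ)))
  have := h1.mul h2
  rw [zero_mul] at this
  apply this.congr
  intro x
  rw [rodG]
  ring

lemma rodG_intervalIntegrable (α β : ℂ) (hα : -1 < α.re) (hβ : -1 < β.re) (n k m : ℕ)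
    (hk : k ≤ n) :
    IntervalIntegrable (fun x : ℝ => rodG α β n k x * (x : ℂ) ^ m) volume 0 1 := by
  set a : ℂ := (n : ℂ) + α - k with ha
  set b : ℂ := (n : ℂ) + β - k with hb
  have hkn : (k : ℝ) ≤ (n : ℝ) := by exact_mod_cast hk
  have hua : 0 < (a + 1).re := by
    simp only [ha, Complex.add_re, Complex.sub_re, Complex.natCast_re, Complex.one_re]
    linarith
  have hub : 0 < (b + 1).re := by
    simp only [hb, Complex.add_re, Complex.sub_re, Complex.natCast_re, Complex.one_re]
    linarith
  have hB : IntervalIntegrable (fun x : ℝ => (x : ℂ) ^ a * (1 - (x : ℂ)) ^ b) volume 0 1 := by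
    have := Complex.betaIntegral_convergent hua hub
    simpa using this
  rw [intervalIntegrable_iff_integrableOn_Ioc_of_le zero_le_one] at hB ⊢
  have hr : Continuous (fun x : ℝ => (rodQ α β n k).eval (x : ℂ) * (x : ℂ) ^ m) :=
    ((rodQ α β n k).continuous.comp Complex.continuous_ofReal).mul
      (Complex.continuous_ofReal.pow m)
  obtain ⟨C, hC⟩ := (isCompact_Icc (a := (0:ℝ)) (b := 1)).exists_bound_of_continuousOn
    hr.continuousOn
  have hint : Integrable (fun x : ℝ =>
      ((rodQ α β n k).eval (x : ℂ) * (x : ℂ) ^ m) * ((x : ℂ) ^ a * (1 - (x : ℂ)) ^ b))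
      (volume.restrict (Set.Ioc (0:ℝ) 1)) := by
    apply hB.bdd_mul (c := C) (hr.aestronglyMeasurable)
    filter_upwards [ae_restrict_mem measurableSet_Ioc] with x hx
    exact hC x (Set.Ioc_subset_Icc_self hx)
  apply hint.congr
  filter_upwards with x
  rw [rodG]
  ring

lemma rodG_ibp_step (α β : ℂ) (hα : -1 < α.re) (hβ : -1 < β.re) (n k : ℕ)
    (hk : k + 1 ≤ n) :
    ∫ x in (0:ℝ)..1, rodG α β n (k+1) x * (x : ℂ) ^ (k+1)
      = -((k : ℂ) + 1) * ∫ x in (0:ℝ)..1, rodG α β n k x * (x : ℂ) ^ k := by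
  have hkn : (k : ℝ) + 1 ≤ (n : ℝ) := by exact_mod_cast hk
  have hposα : 0 < ((n : ℂ) + α - k).re := by
    simp only [Complex.add_re, Complex.sub_re, Complex.natCast_re]
    linarith
  have hposβ : 0 < ((n : ℂ) + β - k).re := by
    simp only [Complex.add_re, Complex.sub_re, Complex.natCast_re]
    linarith
  set f : ℝ → ℂ := fun x => rodG α β n k x * (x : ℂ) ^ (k+1) with hf
  set f' : ℝ → ℂ := fun x =>
    rodG α β n (k+1) x * (x : ℂ) ^ (k+1) + ((k : ℂ) + 1) * (rodG α β n k x * (x : ℂ) ^ k)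
    with hf'
  have hderiv : ∀ x ∈ Set.Ioo (0:ℝ) 1, HasDerivAt f (f' x) x := by
    intro x hx
    have hzV : (x : ℂ) ∈ rodV := mem_rodV hx
    have Hc : HasDerivAt (fun z : ℂ => rodG α β n k z * z ^ (k+1))
        (rodG α β n (k+1) (x:ℂ) * (x:ℂ) ^ (k+1)
          + rodG α β n k (x:ℂ) * (((k:ℂ)+1) * (x:ℂ) ^ k)) (x : ℂ) := by
      have := (hasDerivAt_rodG α β n k hzV).fun_mul (hasDerivAt_pow (k+1) (x:ℂ))
      refine this.congr_deriv ?_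
      push_cast
      ring
    have := Hc.comp_ofReal
    apply this.congr_deriv
    rw [hf']
    ring
  have hint : IntervalIntegrable f' volume 0 1 := by
    apply IntervalIntegrable.add
    · exact rodG_intervalIntegrable α β hα hβ n (k+1) (k+1) hk
    · exact (rodG_intervalIntegrable α β hα hβ n k k (by omega)).const_mul _
  have h0 : Tendsto f (𝓝[>] (0:ℝ)) (𝓝 0) :=
    rodG_tendsto_zero_at_zero α β n k (k+1) hposα
  have h1 : Tendsto f (𝓝[<] (1:ℝ)) (𝓝 0) :=
    rodG_tendsto_zero_at_one α β n k (k+1) hposβ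
  have key : ∫ x in (0:ℝ)..1, f' x = 0 - 0 :=
    intervalIntegral.integral_eq_sub_of_hasDerivAt_of_tendsto zero_lt_one hderiv hint h0 h1
  rw [sub_zero] at key
  rw [hf', intervalIntegral.integral_add
      (rodG_intervalIntegrable α β hα hβ n (k+1) (k+1) hk)
      ((rodG_intervalIntegrable α β hα hβ n k k (by omega)).const_mul _),
    intervalIntegral.integral_const_mul] at key
  linear_combination key

lemma rodG_integral_eq (α β : ℂ) (hα : -1 < α.re) (hβ : -1 < β.re) (n : ℕ) :
    ∀ k, k ≤ n →
      ∫ x in (0:ℝ)..1, rodG α β n k x * (x : ℂ) ^ k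
        = (-1 : ℂ) ^ k * (k.factorial : ℂ) *
          ∫ x in (0:ℝ)..1, rodG α β n 0 x * (x : ℂ) ^ 0 := by
  intro k
  induction k with
  | zero => intro _; simp
  | succ k ih =>
    intro hk
    rw [rodG_ibp_step α β hα hβ n k hk, ih (by omega)]
    rw [pow_succ, Nat.factorial_succ]
    push_cast
    ring

/-- For `Re α > -1`, `Re β > -1` and `n ≥ 1`, integrating by parts `n` times
(with all boundary terms vanishing) gives
`∫_0^1 [xⁿ(1-x)ⁿ w(x)]⁽ⁿ⁾ xⁿ dx = (-1)ⁿ n! ∫_0^1 x^(n+α)(1-x)^(n+β) dx`,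
where `w(x) = x^α(1-x)^β`. -/
theorem rodrigues_integration_by_parts (α β : ℂ) (hα : -1 < α.re) (hβ : -1 < β.re)
    (n : ℕ) (hn : 1 ≤ n) :
    ∫ x in (0:ℝ)..1,
        iteratedDeriv n (fun z : ℂ => z ^ n * (1 - z) ^ n * (z ^ α * (1 - z) ^ β)) (x : ℂ)
          * (x : ℂ) ^ n
      = (-1 : ℂ) ^ n * (n.factorial : ℂ) *
        ∫ x in (0:ℝ)..1, (x : ℂ) ^ ((n : ℂ) + α) * (1 - (x : ℂ)) ^ ((n : ℂ) + β) := by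
  have hne : ∀ᵐ (x : ℝ), x ≠ 1 := by
    rw [ae_iff]
    have : {x : ℝ | ¬ x ≠ 1} = {1} := by ext x; simp
    rw [this]
    exact Real.volume_singleton
  have hL : ∫ x in (0:ℝ)..1,
      iteratedDeriv n (fun z : ℂ => z ^ n * (1 - z) ^ n * (z ^ α * (1 - z) ^ β)) (x : ℂ)
        * (x : ℂ) ^ n
      = ∫ x in (0:ℝ)..1, rodG α β n n x * (x : ℂ) ^ n := by
    apply intervalIntegral.integral_congr_ae
    filter_upwards [hne] with x hx hmem
    rw [Set.uIoc_of_le zero_le_one] at hmem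
    have hxIoo : x ∈ Set.Ioo (0:ℝ) 1 := ⟨hmem.1, lt_of_le_of_ne hmem.2 hx⟩
    rw [iteratedDeriv_rodF α β n n (mem_rodV hxIoo)]
  have hR : ∫ x in (0:ℝ)..1, (x : ℂ) ^ ((n : ℂ) + α) * (1 - (x : ℂ)) ^ ((n : ℂ) + β)
      = ∫ x in (0:ℝ)..1, rodG α β n 0 x * (x : ℂ) ^ 0 := by
    apply intervalIntegral.integral_congr
    intro x _
    simp [rodG, rodQ]
  rw [hL, hR, rodG_integral_eq α β hα hβ n n le_rfl]
end
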